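/- Let X be a real Banach space. For each i ≥ 1 let U_i be a finite set, for each u ∈ U_i let T_i(u) ⊆ [0, π/2] be a finite set, and for each u ∈ ⋃_i U_i let (v_n(u))_{n≥1} be a sequence in X with 1 ≤ ‖v_n(u)‖ for all n and ‖v_n(u)‖ → 1 as n → ∞. Then for every ζ > 0 there exists a strictly increasing map n : ℕ → ℕ such that for every i ≥ 1, every u ∈ U_i, and every τ ∈ T_i(u), one has ‖cos(τ)·v_{n(i)}(u) + sin(τ)·v_{n(i+1)}(u)‖ ≥ √2/(3·(1+ζ)). -/

import Mathlib

open Real Filter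

/-- Pigeonhole: an infinite set of naturals colored by finitely many colors has an
infinite color class. -/
lemma aux_pigeonhole {N : ℕ} (g : ℕ → Fin N) {A : Set ℕ} (hA : A.Infinite) :
    ∃ k : Fin N, {a | a ∈ A ∧ g a = k}.Infinite := by
  by_contra h
  push_neg at h
  have hunion : A = ⋃ k : Fin N, {a | a ∈ A ∧ g a = k} := by
    ext a
    simp only [Set.mem_iUnion, Set.mem_setOf_eq]
    exact ⟨fun ha => ⟨g a, ha, rfl⟩, fun ⟨k, ha, _⟩ => ha⟩
  exact hA (hunion ▸ Set.finite_iUnion h)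

/-- Infinite Ramsey theorem for pairs with finitely many colors. -/
lemma aux_ramsey {N : ℕ} (C : ℕ → ℕ → Fin N) {A : Set ℕ} (hA : A.Infinite) :
    ∃ S : Set ℕ, S ⊆ A ∧ S.Infinite ∧ ∃ k : Fin N,
      ∀ a ∈ S, ∀ b ∈ S, a < b → C a b = k := by
  classical
  have step : ∀ (B : Set ℕ), B.Infinite →
      ∃ a, a ∈ B ∧ ∃ k : Fin N, ∃ B' : Set ℕ, B' ⊆ B ∧ B'.Infinite ∧
        ∀ b ∈ B', a < b ∧ C a b = k := by
    intro B hB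
    obtain ⟨a, ha⟩ := hB.nonempty
    have hB' : {x | x ∈ B ∧ a < x}.Infinite := by
      have heq : {x | x ∈ B ∧ a < x} = B \ Set.Iic a := by
        ext x
        simp only [Set.mem_setOf_eq, Set.mem_diff, Set.mem_Iic, not_le]
      rw [heq]
      exact hB.diff (Set.finite_Iic a)
    obtain ⟨k, hk⟩ := aux_pigeonhole (C a) hB'
    refine ⟨a, ha, k, {x | (x ∈ B ∧ a < x) ∧ C a x = k}, ?_, ?_, ?_⟩
    · intro x hx; exact hx.1.1
    · exact hk
    · intro b hb; exact ⟨hb.1.2, hb.2⟩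
  choose el hel kc B' hB'sub hB'inf hB'prop using step
  let F : ℕ → {S : Set ℕ // S.Infinite} := fun n =>
    Nat.rec ⟨A, hA⟩ (fun _ p => ⟨B' p.1 p.2, hB'inf p.1 p.2⟩) n
  have hchain : ∀ j, (F (j + 1)).1 ⊆ (F j).1 := fun j => hB'sub _ _
  have hchain' : ∀ i j, i ≤ j → (F j).1 ⊆ (F i).1 := by
    intro i j hij
    induction hij with
    | refl => exact subset_rfl
    | step _ ih => exact fun x hx => ih (hchain _ hx)
  set aseq : ℕ → ℕ := fun j => el (F j).1 (F j).2 with haseq_def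
  set kseq : ℕ → Fin N := fun j => kc (F j).1 (F j).2 with hkseq_def
  have haseq : ∀ j, aseq j ∈ (F j).1 := fun j => hel _ _
  have hprop : ∀ j, ∀ b ∈ (F (j + 1)).1, aseq j < b ∧ C (aseq j) b = kseq j :=
    fun j b hb => hB'prop (F j).1 (F j).2 b hb
  have hlt : ∀ i j, i < j → aseq i < aseq j ∧ C (aseq i) (aseq j) = kseq i := by
    intro i j hij
    exact hprop i (aseq j) (hchain' (i + 1) j hij (haseq j))
  obtain ⟨k, hk⟩ := aux_pigeonhole kseq (Set.infinite_univ (α := ℕ))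
  have hmono : StrictMono aseq := fun i j hij => (hlt i j hij).1
  refine ⟨aseq '' {a | a ∈ Set.univ ∧ kseq a = k}, ?_, ?_, k, ?_⟩
  · rintro x ⟨j, _, rfl⟩
    exact hchain' 0 j (Nat.zero_le j) (haseq j)
  · exact hk.image (hmono.injective.injOn)
  · rintro x ⟨i, hi, rfl⟩ y ⟨j, hj, rfl⟩ hxy
    have hij : i < j := by
      rcases lt_trichotomy i j with h | h | h
      · exact h
      · exfalso; rw [h] at hxy; exact lt_irrefl _ hxy
      · exfalso; exact lt_asymm hxy (hmono h)
    rw [(hlt i j hij).2]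
    exact hi.2

set_option maxHeartbeats 1000000 in
/-- Key stabilization lemma: given a sequence with norms in `[1, Bd]` and coefficients
`c, s ≥ 0` with `c² + s² = 1`, every infinite set of indices contains an infinite subset
on which all pairs `a < b` satisfy `‖c • w a + s • w b‖ ≥ √2/3 - ε`. -/
lemma aux_stabilize {X : Type*} [NormedAddCommGroup X] [NormedSpace ℝ X]
    (w : ℕ → X) (hlb : ∀ n, 1 ≤ ‖w n‖) (Bd : ℝ) (hub : ∀ n, ‖w n‖ ≤ Bd)
    (c s : ℝ) (hc : 0 ≤ c) (hs : 0 ≤ s) (hcs : c ^ 2 + s ^ 2 = 1)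
    (ε : ℝ) (hε : 0 < ε) {A : Set ℕ} (hA : A.Infinite) :
    ∃ S : Set ℕ, S ⊆ A ∧ S.Infinite ∧
      ∀ a ∈ S, ∀ b ∈ S, a < b → Real.sqrt 2 / 3 - ε ≤ ‖c • w a + s • w b‖ := by
  classical
  set f : ℕ → ℕ → ℝ := fun a b => ‖c • w a + s • w b‖ with hf_def
  have hc1 : c ≤ 1 := by nlinarith [sq_nonneg s, sq_nonneg c]
  have hs1 : s ≤ 1 := by nlinarith [sq_nonneg s, sq_nonneg c]
  have hBd1 : 1 ≤ Bd := le_trans (hlb 0) (hub 0)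
  have hfub : ∀ a b, f a b ≤ 2 * Bd := by
    intro a b
    calc f a b ≤ ‖c • w a‖ + ‖s • w b‖ := norm_add_le _ _
    _ = c * ‖w a‖ + s * ‖w b‖ := by
        rw [norm_smul, norm_smul, Real.norm_of_nonneg hc, Real.norm_of_nonneg hs]
    _ ≤ 1 * Bd + 1 * Bd := by
        have h1 : c * ‖w a‖ ≤ 1 * Bd :=
          mul_le_mul hc1 (hub a) (norm_nonneg _) zero_le_one
        have h2 : s * ‖w b‖ ≤ 1 * Bd :=
          mul_le_mul hs1 (hub b) (norm_nonneg _) zero_le_one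
        linarith
    _ = 2 * Bd := by ring
  set N : ℕ := ⌊2 * Bd / ε⌋₊ + 1 with hN_def
  have hfloorlt : ∀ a b, ⌊f a b / ε⌋₊ < N := by
    intro a b
    have hle : f a b / ε ≤ 2 * Bd / ε := by
      gcongr
      exact hfub a b
    calc ⌊f a b / ε⌋₊ ≤ ⌊2 * Bd / ε⌋₊ := Nat.floor_le_floor hle
    _ < N := Nat.lt_succ_self _
  set C : ℕ → ℕ → Fin N := fun a b => ⟨⌊f a b / ε⌋₊, hfloorlt a b⟩ with hC_def
  obtain ⟨S, hSA, hSinf, k, hk⟩ := aux_ramsey C hA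
  refine ⟨S, hSA, hSinf, ?_⟩
  obtain ⟨kr, hkr0, hflow⟩ : ∃ kr : ℝ, 0 ≤ kr ∧ ∀ a ∈ S, ∀ b ∈ S, a < b →
      kr ≤ f a b ∧ f a b < kr + ε := by
    refine ⟨(k.1 : ℝ) * ε, by positivity, ?_⟩
    intro a ha b hb hab
    have h1 : ⌊f a b / ε⌋₊ = k.1 := congrArg Fin.val (hk a ha b hb hab)
    constructor
    · have hle : (⌊f a b / ε⌋₊ : ℝ) ≤ f a b / ε :=
        Nat.floor_le (div_nonneg (norm_nonneg _) hε.le)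
      rw [h1] at hle
      calc (k.1 : ℝ) * ε ≤ (f a b / ε) * ε := mul_le_mul_of_nonneg_right hle hε.le
      _ = f a b := div_mul_cancel₀ _ hε.ne'
    · have hlt2 : f a b / ε < (⌊f a b / ε⌋₊ : ℝ) + 1 := Nat.lt_floor_add_one _
      rw [h1] at hlt2
      have := (div_lt_iff₀ hε).mp hlt2
      nlinarith
  clear hk
  obtain ⟨x, hx⟩ := hSinf.nonempty
  obtain ⟨y, hyS, hxy⟩ := hSinf.exists_gt x
  obtain ⟨z, hzS, hyz⟩ := hSinf.exists_gt y
  have hxz : x < z := hxy.trans hyz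
  have hUxy := hflow x hx y hyS hxy
  have hUxz := hflow x hx z hzS hxz
  have hUyz := hflow y hyS z hzS hyz
  have hr2 : Real.sqrt 2 ^ 2 = 2 := Real.sq_sqrt (by norm_num)
  have hrpos : (0 : ℝ) < Real.sqrt 2 := Real.sqrt_pos.mpr (by norm_num)
  have hkey : Real.sqrt 2 ≤ 3 * (kr + ε) := by
    rcases le_total s c with hsc | hcs'
    · -- case s ≤ c
      have h2c : Real.sqrt 2 ≤ 2 * c := by nlinarith [hr2, hrpos.le]
      have hcpos : 0 < c := by linarith
      have hid : (c * (c + s)) • w x =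
          c • (c • w x + s • w y) + s • (c • w x + s • w z) - s • (c • w y + s • w z) := by
        module
      have hnorm : c * (c + s) * ‖w x‖ ≤ c * f x y + s * f x z + s * f y z := by
        have e1 : c * (c + s) * ‖w x‖ = ‖(c * (c + s)) • w x‖ := by
          rw [norm_smul, Real.norm_of_nonneg (by positivity)]
        rw [e1, hid]
        calc ‖c • (c • w x + s • w y) + s • (c • w x + s • w z) - s • (c • w y + s • w z)‖
            ≤ ‖c • (c • w x + s • w y) + s • (c • w x + s • w z)‖ + ‖s • (c • w y + s • w z)‖ :=
              norm_sub_le _ _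
        _ ≤ ‖c • (c • w x + s • w y)‖ + ‖s • (c • w x + s • w z)‖ + ‖s • (c • w y + s • w z)‖ := by
              have := norm_add_le (c • (c • w x + s • w y)) (s • (c • w x + s • w z))
              linarith
        _ = c * f x y + s * f x z + s * f y z := by
              simp only [hf_def, norm_smul, Real.norm_of_nonneg hc, Real.norm_of_nonneg hs]
      have e1 : c * (c + s) ≤ c * (c + s) * ‖w x‖ :=
        le_mul_of_one_le_right (by positivity) (hlb x)
      have e2 : c * f x y ≤ c * (kr + ε) := mul_le_mul_of_nonneg_left hUxy.2.le hc
      have e3 : s * f x z ≤ s * (kr + ε) := mul_le_mul_of_nonneg_left hUxz.2.le hs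
      have e4 : s * f y z ≤ s * (kr + ε) := mul_le_mul_of_nonneg_left hUyz.2.le hs
      have h1 : c * (c + s) ≤ c * (kr + ε) + s * (kr + ε) + s * (kr + ε) := by linarith
      have hpoly : Real.sqrt 2 * (c + 2 * s) ≤ 3 * (c * (c + s)) := by
        nlinarith [mul_nonneg (sub_nonneg.2 hsc) hrpos.le,
          mul_nonneg (add_nonneg hc hs) (sub_nonneg.2 h2c)]
      have h3 : 3 * (c * (kr + ε) + s * (kr + ε) + s * (kr + ε))
          = (c + 2 * s) * (3 * (kr + ε)) := by ring
      have hfin : (c + 2 * s) * Real.sqrt 2 ≤ (c + 2 * s) * (3 * (kr + ε)) := by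
        have hcm : (c + 2 * s) * Real.sqrt 2 = Real.sqrt 2 * (c + 2 * s) := by ring
        linarith [hpoly, h1, h3]
      have hc2s : (0 : ℝ) < c + 2 * s := by linarith
      exact le_of_mul_le_mul_left hfin hc2s
    · -- case c ≤ s
      have h2s : Real.sqrt 2 ≤ 2 * s := by nlinarith [hr2, hrpos.le]
      have hspos : 0 < s := by linarith
      have hid : (s * (c + s)) • w z =
          s • (c • w y + s • w z) + c • (c • w x + s • w z) - c • (c • w x + s • w y) := by
        module
      have hnorm : s * (c + s) * ‖w z‖ ≤ s * f y z + c * f x z + c * f x y := by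
        have e1 : s * (c + s) * ‖w z‖ = ‖(s * (c + s)) • w z‖ := by
          rw [norm_smul, Real.norm_of_nonneg (by positivity)]
        rw [e1, hid]
        calc ‖s • (c • w y + s • w z) + c • (c • w x + s • w z) - c • (c • w x + s • w y)‖
            ≤ ‖s • (c • w y + s • w z) + c • (c • w x + s • w z)‖ + ‖c • (c • w x + s • w y)‖ :=
              norm_sub_le _ _
        _ ≤ ‖s • (c • w y + s • w z)‖ + ‖c • (c • w x + s • w z)‖ + ‖c • (c • w x + s • w y)‖ := by
              have := norm_add_le (s • (c • w y + s • w z)) (c • (c • w x + s • w z))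
              linarith
        _ = s * f y z + c * f x z + c * f x y := by
              simp only [hf_def, norm_smul, Real.norm_of_nonneg hc, Real.norm_of_nonneg hs]
      have e1 : s * (c + s) ≤ s * (c + s) * ‖w z‖ :=
        le_mul_of_one_le_right (by positivity) (hlb z)
      have e2 : s * f y z ≤ s * (kr + ε) := mul_le_mul_of_nonneg_left hUyz.2.le hs
      have e3 : c * f x z ≤ c * (kr + ε) := mul_le_mul_of_nonneg_left hUxz.2.le hc
      have e4 : c * f x y ≤ c * (kr + ε) := mul_le_mul_of_nonneg_left hUxy.2.le hc
      have h1 : s * (c + s) ≤ s * (kr + ε) + c * (kr + ε) + c * (kr + ε) := by linarith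
      have hpoly : Real.sqrt 2 * (s + 2 * c) ≤ 3 * (s * (c + s)) := by
        nlinarith [mul_nonneg (sub_nonneg.2 hcs') hrpos.le,
          mul_nonneg (add_nonneg hc hs) (sub_nonneg.2 h2s)]
      have h3 : 3 * (s * (kr + ε) + c * (kr + ε) + c * (kr + ε))
          = (s + 2 * c) * (3 * (kr + ε)) := by ring
      have hfin : (s + 2 * c) * Real.sqrt 2 ≤ (s + 2 * c) * (3 * (kr + ε)) := by
        have hcm : (s + 2 * c) * Real.sqrt 2 = Real.sqrt 2 * (s + 2 * c) := by ring
        linarith [hpoly, h1, h3]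
      have hs2c : (0 : ℝ) < s + 2 * c := by linarith
      exact le_of_mul_le_mul_left hfin hs2c
  intro a ha b hb hab
  have hlow := (hflow a ha b hb hab).1
  show Real.sqrt 2 / 3 - ε ≤ f a b
  linarith

/-- Refinement over a finite family of conditions. -/
lemma aux_refine_finset {α : Type*} (R : α → Set ℕ → Prop)
    (hmono : ∀ x (S S' : Set ℕ), S' ⊆ S → R x S → R x S') (F : Finset α) :
    (∀ x ∈ F, ∀ A : Set ℕ, A.Infinite → ∃ S, S ⊆ A ∧ S.Infinite ∧ R x S) →
      ∀ A : Set ℕ, A.Infinite → ∃ S, S ⊆ A ∧ S.Infinite ∧ ∀ x ∈ F, R x S := by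
  classical
  induction F using Finset.induction_on with
  | empty =>
    intro _ A hA
    exact ⟨A, subset_rfl, hA, by simp⟩
  | @insert a F ha ih =>
    intro hR A hA
    obtain ⟨S1, hS1A, hS1inf, hS1⟩ := ih (fun x hx => hR x (Finset.mem_insert_of_mem hx)) A hA
    obtain ⟨S2, hS2S1, hS2inf, hS2⟩ := hR a (Finset.mem_insert_self a F) S1 hS1inf
    refine ⟨S2, hS2S1.trans hS1A, hS2inf, ?_⟩
    intro x hx
    rcases Finset.mem_insert.mp hx with rfl | hx
    · exact hS2
    · exact hmono x S1 S2 hS2S1 (hS1 x hx)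

/-- **Proposition (subsequence selection via Brunel–Sucheston sequences).**
Given, for each `i ≥ 1`, a finite set `U i` of directions, for each direction `u` a finite
set `T i u ⊆ [0, π/2]` of angles, and for each direction a sequence `v u` in a Banach space
`X` with `1 ≤ ‖v u n‖` and `‖v u n‖ → 1`, then for each `ζ > 0` one can select a strictly
increasing sequence of indices `n` so that for all `i ≥ 1`, `u ∈ U i`, `τ ∈ T i u`,
`‖cos τ • v u (n i) + sin τ • v u (n (i+1))‖ ≥ √2 / (3 (1 + ζ))`. -/
theorem subsequence_selection
    (X : Type*) [NormedAddCommGroup X] [NormedSpace ℝ X] [CompleteSpace X]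
    (ι : Type*)
    (U : ℕ → Finset ι)
    (T : ℕ → ι → Finset ℝ)
    (hT : ∀ i u, ∀ τ ∈ T i u, τ ∈ Set.Icc 0 (π / 2))
    (v : ι → ℕ → X)
    (hv_lb : ∀ u n, 1 ≤ ‖v u n‖)
    (hv_lim : ∀ u, Tendsto (fun n => ‖v u n‖) atTop (nhds 1))
    (ζ : ℝ) (hζ : 0 < ζ) :
    ∃ n : ℕ → ℕ, StrictMono n ∧
      ∀ i : ℕ, 1 ≤ i → ∀ u ∈ U i, ∀ τ ∈ T i u,
        Real.sqrt 2 / (3 * (1 + ζ)) ≤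
          ‖Real.cos τ • v u (n i) + Real.sin τ • v u (n (i + 1))‖ := by
  classical
  have hrpos : (0 : ℝ) < Real.sqrt 2 := Real.sqrt_pos.mpr (by norm_num)
  set ε : ℝ := Real.sqrt 2 / 3 - Real.sqrt 2 / (3 * (1 + ζ)) with hε_def
  have hεpos : 0 < ε := by
    rw [hε_def, sub_pos]
    apply div_lt_div_of_pos_left hrpos (by norm_num)
    nlinarith
  -- upper bounds for each direction's norms
  have hub : ∀ u : ι, ∃ Bd : ℝ, ∀ n, ‖v u n‖ ≤ Bd := by
    intro u
    obtain ⟨Bd, hBd⟩ := (hv_lim u).bddAbove_range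
    exact ⟨Bd, fun n => hBd (Set.mem_range_self n)⟩
  choose Bd hBd using hub
  -- the per-step refinement
  set Good : ℕ → Set ℕ → Prop := fun i S =>
    ∀ u ∈ U i, ∀ τ ∈ T i u, ∀ a ∈ S, ∀ b ∈ S, a < b →
      Real.sqrt 2 / (3 * (1 + ζ)) ≤ ‖Real.cos τ • v u a + Real.sin τ • v u b‖ with hGood_def
  have hstep : ∀ (i : ℕ) (A : Set ℕ), A.Infinite →
      ∃ S, S ⊆ A ∧ S.Infinite ∧ Good i S := by
    intro i A hA
    set R : (Σ _ : ι, ℝ) → Set ℕ → Prop := fun p S =>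
      ∀ a ∈ S, ∀ b ∈ S, a < b →
        Real.sqrt 2 / (3 * (1 + ζ)) ≤ ‖Real.cos p.2 • v p.1 a + Real.sin p.2 • v p.1 b‖
      with hR_def
    have hmono : ∀ p (S S' : Set ℕ), S' ⊆ S → R p S → R p S' :=
      fun p S S' hsub h a ha b hb hab => h a (hsub ha) b (hsub hb) hab
    have hsingle : ∀ p ∈ (U i).sigma (fun u => T i u), ∀ A : Set ℕ, A.Infinite →
        ∃ S, S ⊆ A ∧ S.Infinite ∧ R p S := by
      rintro ⟨u, τ⟩ hp A hA
      rw [Finset.mem_sigma] at hp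
      obtain ⟨hτ0, hτ2⟩ := hT i u τ hp.2
      have hcos : 0 ≤ Real.cos τ :=
        Real.cos_nonneg_of_mem_Icc ⟨by linarith [Real.pi_pos, hτ0], hτ2⟩
      have hsin : 0 ≤ Real.sin τ :=
        Real.sin_nonneg_of_nonneg_of_le_pi hτ0 (by linarith [Real.pi_pos])
      have hcs : Real.cos τ ^ 2 + Real.sin τ ^ 2 = 1 := Real.cos_sq_add_sin_sq τ
      obtain ⟨S, hSA, hSinf, hS⟩ := aux_stabilize (v u) (hv_lb u) (Bd u) (hBd u)
        (Real.cos τ) (Real.sin τ) hcos hsin hcs ε hεpos hA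
      refine ⟨S, hSA, hSinf, ?_⟩
      intro a ha b hb hab
      have := hS a ha b hb hab
      have heq : Real.sqrt 2 / 3 - ε = Real.sqrt 2 / (3 * (1 + ζ)) := by
        rw [hε_def]; ring
      rw [heq] at this
      exact this
    obtain ⟨S, hSA, hSinf, hS⟩ :=
      aux_refine_finset R hmono ((U i).sigma (fun u => T i u)) hsingle A hA
    refine ⟨S, hSA, hSinf, ?_⟩
    intro u hu τ hτ
    exact hS ⟨u, τ⟩ (Finset.mem_sigma.mpr ⟨hu, hτ⟩)
  choose nextS hsub hinf hgood using hstep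
  -- chain of infinite sets
  set F : ℕ → {S : Set ℕ // S.Infinite} := fun i =>
    Nat.rec ⟨nextS 0 Set.univ Set.infinite_univ, hinf 0 Set.univ Set.infinite_univ⟩
      (fun i p => ⟨nextS (i + 1) p.1 p.2, hinf (i + 1) p.1 p.2⟩) i with hF_def
  have hgoodF : ∀ i, Good i (F i).1 := by
    intro i
    cases i with
    | zero => exact hgood 0 Set.univ Set.infinite_univ
    | succ j => exact hgood (j + 1) (F j).1 (F j).2
  have hchain : ∀ i, (F (i + 1)).1 ⊆ (F i).1 := fun i => hsub (i + 1) (F i).1 (F i).2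
  -- pick an increasing sequence with n i ∈ F i
  have hpick : ∀ (i m : ℕ), ∃ b, b ∈ (F i).1 ∧ m < b := by
    intro i m
    obtain ⟨b, hb, hmb⟩ := (F i).2.exists_gt m
    exact ⟨b, hb, hmb⟩
  choose pk hpk1 hpk2 using hpick
  set n : ℕ → ℕ := fun i => Nat.rec (pk 0 0) (fun i x => pk (i + 1) x) i with hn_def
  have hmem : ∀ i, n i ∈ (F i).1 := by
    intro i
    cases i with
    | zero => exact hpk1 0 0
    | succ j => exact hpk1 (j + 1) (n j)
  have hmono : StrictMono n := by
    apply strictMono_nat_of_lt_succ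
    intro i
    exact hpk2 (i + 1) (n i)
  refine ⟨n, hmono, ?_⟩
  intro i _ u hu τ hτ
  exact hgoodF i u hu τ hτ (n i) (hmem i) (n (i + 1)) (hchain i (hmem (i + 1)))
    (hmono (Nat.lt_succ_self i))
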